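/- Let G = (V,E) be a finite directed acyclic graph with no multiple edges. Then G is singly-connected if and only if for every source v (vertex of indegree 0) and every vertex w ∈ V there is at most one simple path from v to w in G. -/

import Mathlib

/-- A simple (directed) path from `v` to `w` in the directed graph with edge relation `E`:
a nonempty list of pairwise distinct vertices starting at `v`, ending at `w`,
with consecutive vertices joined by edges. -/
def IsSimplePath {V : Type*} (E : V → V → Prop) (v w : V) (p : List V) : Prop :=
  p.Chain' E ∧ p.head? = some v ∧ p.getLast? = some w ∧ p.Nodup

/-- A directed graph is singly-connected if for every pair of vertices there is
at most one simple path between them. -/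
def SinglyConnected {V : Type*} (E : V → V → Prop) : Prop :=
  ∀ v w : V, ∀ p q : List V, IsSimplePath E v w p → IsSimplePath E v w q → p = q

/-- A directed graph is acyclic if it has no directed cycle. -/
def DAcyclic {V : Type*} (E : V → V → Prop) : Prop :=
  ∀ v : V, ¬ Relation.TransGen E v v

private lemma chain'_reflTransGen {V : Type*} {E : V → V → Prop} :
    ∀ {p : List V} {v a : V}, p.Chain' E → p.head? = some v → a ∈ p →
      Relation.ReflTransGen E v a := by
  intro p
  induction p with
  | nil => simp
  | cons b t ih =>
    intro v a hc hh ha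
    simp only [List.head?_cons, Option.some.injEq] at hh
    subst hh
    rcases List.mem_cons.1 ha with h | h
    · subst h; exact Relation.ReflTransGen.refl
    · cases t with
      | nil => simp at h
      | cons c t' =>
        change List.IsChain E _ at hc; rw [List.isChain_cons_cons] at hc
        exact Relation.ReflTransGen.head hc.1 (ih hc.2 rfl h)

private lemma cons_simplePath {V : Type*} {E : V → V → Prop} (hacyc : DAcyclic E)
    {v w x : V} {p : List V} (hp : IsSimplePath E v w p) (hx : E x v) :
    IsSimplePath E x w (x :: p) := by
  obtain ⟨hc, hh, hl, hn⟩ := hp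
  have hxp : x ∉ p := by
    intro hmem
    exact hacyc v (Relation.TransGen.tail' (chain'_reflTransGen hc hh hmem) hx)
  refine ⟨?_, rfl, ?_, hn.cons hxp⟩
  · change List.IsChain E _; rw [List.isChain_cons]
    exact ⟨fun b hb => by rw [hh] at hb; cases hb; exact hx, hc⟩
  · cases p with
    | nil => simp at hh
    | cons c t => rw [List.getLast?_cons_cons]; exact hl

theorem singlyConnected_iff_unique_paths_from_sources {V : Type*} [Finite V]
    (E : V → V → Prop) (hacyc : DAcyclic E) :
    SinglyConnected E ↔
      ∀ v : V, (∀ x : V, ¬ E x v) → ∀ w : V, ∀ p q : List V,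
        IsSimplePath E v w p → IsSimplePath E v w q → p = q := by
  constructor
  · intro h v _ w p q hp hq
    exact h v w p q hp hq
  · intro h
    have htrans : IsTrans V (Relation.TransGen E) := ⟨fun _ _ _ => Relation.TransGen.trans⟩
    have hirr : IsIrrefl V (Relation.TransGen E) := ⟨hacyc⟩
    have hwf : WellFounded (Relation.TransGen E) :=
      Finite.wellFounded_of_trans_of_irrefl _
    have hwfE : WellFounded E := Subrelation.wf (fun h => Relation.TransGen.single h) hwf
    intro v
    induction v using hwf.induction with
    | _ v ih =>
      intro w p q hp hq
      by_cases hsrc : ∀ x : V, ¬ E x v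
      · exact h v hsrc w p q hp hq
      · push_neg at hsrc
        obtain ⟨x, hx⟩ := hsrc
        have := ih x (Relation.TransGen.single hx) w (x :: p) (x :: q)
          (cons_simplePath hacyc hp hx) (cons_simplePath hacyc hq hx)
        exact List.cons_injective this
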